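/- Let n ≥ 3 be an integer, let S = {s(n−1)+1 : s ∈ ℤ, 1 ≤ s ≤ n} ⊆ ℕ, and let ⟨S⟩ be the additive submonoid of ℕ generated by S. Then the complement ℕ \ ⟨S⟩ equals the set G_n := {(i−1)(n−1)+j : i, j ∈ ℤ, 1 ≤ i ≤ j ≤ n−1}. -/

import Mathlib

lemma aux_mem (n : ℕ) (hn : 3 ≤ n) : ∀ k t : ℕ, 1 ≤ k → k ≤ t → t ≤ k * n →
    (t * (n - 1) + k) ∈ AddSubmonoid.closure
      {m : ℕ | ∃ s : ℤ, 1 ≤ s ∧ s ≤ (n : ℤ) ∧ (m : ℤ) = s * ((n : ℤ) - 1) + 1} := by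
  intro k
  induction k with
  | zero => omega
  | succ k ih =>
    intro t _ hkt htk
    rcases Nat.eq_zero_or_pos k with hk0 | hk0
    · subst hk0
      apply AddSubmonoid.subset_closure
      have ht1 : 1 ≤ t := by omega
      have htn : t ≤ n := by simpa using htk
      refine ⟨(t : ℤ), by exact_mod_cast ht1, by exact_mod_cast htn, ?_⟩
      push_cast [Nat.cast_sub (by omega : 1 ≤ n)]
      ring
    · set s : ℕ := if t ≤ k * n then 1 else t - k * n with hs
      have hK : k ≤ k * n := Nat.le_mul_of_pos_right k (by omega)
      have htk' : t ≤ k * n + n := by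
        have : (k+1) * n = k * n + n := by ring
        omega
      have hs1 : 1 ≤ s := by rw [hs]; split_ifs <;> omega
      have hsn : s ≤ n := by rw [hs]; split_ifs <;> omega
      have hst : s ≤ t - k := by rw [hs]; split_ifs <;> omega
      have hts : t - s ≤ k * n := by rw [hs]; split_ifs <;> omega
      have hmul : s * (n-1) ≤ t * (n-1) := Nat.mul_le_mul_right _ (by omega)
      have hsub : (t - s) * (n-1) = t * (n-1) - s * (n-1) := Nat.sub_mul t s (n-1)
      have key : t * (n - 1) + (k + 1) =
          (s * (n - 1) + 1) + ((t - s) * (n - 1) + k) := by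
        rw [hsub]; omega
      rw [key]
      refine AddSubmonoid.add_mem _ (AddSubmonoid.subset_closure ?_)
        (ih (t - s) hk0 (by omega) hts)
      refine ⟨(s : ℤ), by exact_mod_cast hs1, by exact_mod_cast hsn, ?_⟩
      push_cast [Nat.cast_sub (by omega : 1 ≤ n)]
      ring

lemma aux_char (n : ℕ) (hn : 3 ≤ n) (m : ℕ)
    (hm : m ∈ AddSubmonoid.closure
      {m : ℕ | ∃ s : ℤ, 1 ≤ s ∧ s ≤ (n : ℤ) ∧ (m : ℤ) = s * ((n : ℤ) - 1) + 1}) :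
    m = 0 ∨ ∃ k t : ℕ, 1 ≤ k ∧ k ≤ t ∧ t ≤ k * n ∧ m = t * (n - 1) + k := by
  induction hm using AddSubmonoid.closure_induction with
  | mem x hx =>
    obtain ⟨s, hs1, hsn, hx⟩ := hx
    right
    have hst : ((s.toNat : ℤ)) = s := Int.toNat_of_nonneg (by omega)
    refine ⟨1, s.toNat, le_refl 1, by omega, ?_, ?_⟩
    · have h1 : (s.toNat : ℤ) ≤ (n : ℤ) := by omega
      have h2 : s.toNat ≤ n := by exact_mod_cast h1
      omega
    · have h2 : ((s.toNat * (n-1) + 1 : ℕ) : ℤ) = (x : ℤ) := by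
        push_cast [Nat.cast_sub (by omega : 1 ≤ n)]
        rw [hst, hx]
      exact_mod_cast h2.symm
  | zero => left; rfl
  | add x y hx hy ihx ihy =>
    rcases ihx with rfl | ⟨k1, t1, h1, h2, h3, rfl⟩
    · simpa using ihy
    rcases ihy with rfl | ⟨k2, t2, h4, h5, h6, rfl⟩
    · right; exact ⟨k1, t1, h1, h2, h3, by omega⟩
    · right
      refine ⟨k1 + k2, t1 + t2, by omega, by omega, ?_, by ring⟩
      have : (k1 + k2) * n = k1 * n + k2 * n := by ring
      omega

theorem stmt_1 (n : ℕ) (hn : 3 ≤ n) :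
    (AddSubmonoid.closure
        {m : ℕ | ∃ s : ℤ, 1 ≤ s ∧ s ≤ (n : ℤ) ∧ (m : ℤ) = s * ((n : ℤ) - 1) + 1} :
      Set ℕ)ᶜ
      = {m : ℕ | ∃ i j : ℤ, 1 ≤ i ∧ i ≤ j ∧ j ≤ (n : ℤ) - 1 ∧
          (m : ℤ) = (i - 1) * ((n : ℤ) - 1) + j} := by
  have hcast : ((n - 1 : ℕ) : ℤ) = (n : ℤ) - 1 := by
    push_cast [Nat.cast_sub (by omega : 1 ≤ n)]; ring
  ext m
  simp only [Set.mem_compl_iff, Set.mem_setOf_eq, SetLike.mem_coe]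
  constructor
  · intro hnot
    have hm0 : m ≠ 0 := by
      rintro rfl
      exact hnot (AddSubmonoid.zero_mem _)
    obtain ⟨q, r, hr1, hrd, hqr⟩ : ∃ q r : ℕ, 1 ≤ r ∧ r ≤ n - 1 ∧ m = q * (n-1) + r := by
      refine ⟨(m-1)/(n-1), (m-1) % (n-1) + 1, by omega, ?_, ?_⟩
      · have := Nat.mod_lt (m-1) (show 0 < n - 1 by omega)
        omega
      · have h := Nat.div_add_mod (m-1) (n-1)
        rw [mul_comm] at h
        omega
    by_cases hqltr : q < r
    · refine ⟨(q : ℤ) + 1, (r : ℤ), by omega, by exact_mod_cast hqltr, ?_, ?_⟩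
      · have : (r : ℤ) ≤ ((n - 1 : ℕ) : ℤ) := by exact_mod_cast hrd
        omega
      · have h : (m : ℤ) = (q : ℤ) * ((n:ℤ) - 1) + r := by
          rw [hqr]; push_cast [Nat.cast_sub (by omega : 1 ≤ n)]; ring
        rw [h]; ring
    · exfalso
      push_neg at hqltr
      obtain ⟨a, han, han2⟩ : ∃ a : ℕ, a * n ≤ q - r ∧ q - r < a * n + n := by
        refine ⟨(q-r)/n, ?_, ?_⟩
        · exact Nat.div_mul_le_self _ _
        · have h := Nat.div_add_mod (q-r) n
          have := Nat.mod_lt (q-r) (show 0 < n by omega)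
          rw [mul_comm] at h
          omega
      have haq : a ≤ q := by
        have : a ≤ a * n := Nat.le_mul_of_pos_right a (by omega)
        omega
      have h4 : a * (n-1) + a = a * n := by
        rw [← Nat.mul_succ, Nat.succ_eq_add_one, Nat.sub_add_cancel (by omega)]
      have e2 : r * (n-1) + r = r * n := by
        rw [← Nat.mul_succ, Nat.succ_eq_add_one, Nat.sub_add_cancel (by omega)]
      have e1 : n - 1 ≤ r * (n-1) := Nat.le_mul_of_pos_left _ (by omega)
      have f1 : a * (n-1) ≤ a * (n-1) * n := Nat.le_mul_of_pos_right _ (by omega)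
      set k : ℕ := r + a * (n-1) with hk
      set t : ℕ := q - a with ht
      have hkt : k ≤ t := by omega
      have htkn : t ≤ k * n := by
        have f3 : k * n = r * n + a * (n-1) * n := by rw [hk]; ring
        omega
      have hsub : t * (n-1) = q * (n-1) - a * (n-1) := by
        rw [ht, Nat.sub_mul]
      have hmul : a * (n-1) ≤ q * (n-1) := Nat.mul_le_mul_right _ haq
      have hmeq : m = t * (n-1) + k := by
        rw [hsub, hk]; omega
      exact hnot (hmeq ▸ aux_mem n hn k t (by omega) hkt htkn)
  · rintro ⟨i, j, hi, hij, hj, hm⟩ hmem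
    rcases aux_char n hn m hmem with rfl | ⟨k, t, hk, hkt, htk, rfl⟩
    · simp only [Nat.cast_zero] at hm
      nlinarith [mul_nonneg (by linarith : (0:ℤ) ≤ i - 1) (by push_cast; omega : (0:ℤ) ≤ (n:ℤ) - 1)]
    · have heq : (t : ℤ) * ((n:ℤ) - 1) + (k : ℤ) = (i - 1) * ((n:ℤ) - 1) + j := by
        have h : ((t * (n-1) + k : ℕ) : ℤ) = (t : ℤ) * ((n:ℤ) - 1) + (k : ℤ) := by
          push_cast [Nat.cast_sub (by omega : 1 ≤ n)]; ring
        rw [← h]; exact hm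
      set c : ℤ := i - 1 - (t : ℤ) with hc
      have hkj : (k : ℤ) - j = c * ((n:ℤ) - 1) := by linear_combination heq
      have hk1 : (1 : ℤ) ≤ (k : ℤ) := by exact_mod_cast hk
      have hn1 : (0 : ℤ) ≤ (n:ℤ) - 1 := by push_cast; omega
      have hcpos : 0 ≤ c := by
        by_contra hneg
        push_neg at hneg
        have hc1 : c ≤ -1 := by omega
        have : c * ((n:ℤ) - 1) ≤ (-1) * ((n:ℤ) - 1) :=
          mul_le_mul_of_nonneg_right hc1 hn1
        linarith
      have hcd : 0 ≤ c * ((n:ℤ) - 1) := mul_nonneg hcpos hn1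
      have hktz : (k : ℤ) ≤ (t : ℤ) := by exact_mod_cast hkt
      linarith
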